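/- arXiv:2506.03116 — 2 statements merged into one kernel-verified Lean document; each statement's English description precedes it below -/
import Mathlib

section
/- For every n ≥ 0 and every standard Young tableau T of shape θ^(n), the word ψ(T) = p_1 p_2 … p_{2n+2} defined by: p_i = E if the entry i+2 of T lies in the arm, p_i = N if i+2 lies in the leg, p_i = S if i+2 lies in the heart and 2 lies in the arm, and p_i = W if i+2 lies in the heart and 2 lies in the leg, is a lattice path in P_n (i.e., ψ is well-defined as a map SYT(θ^(n)) → P_n). -/
/-- The four unit steps of a lattice path. -/
inductive Step : Type
  | N | S | E | W
  deriving DecidableEq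

/-- The vector in `ℤ × ℤ` corresponding to a step. -/
def stepVec : Step → ℤ × ℤ
  | Step.N => (0, 1)
  | Step.S => (0, -1)
  | Step.E => (1, 0)
  | Step.W => (-1, 0)

/-- The endpoint of the lattice path described by the word `w`, starting at the origin. -/
def endpt (w : List Step) : ℤ × ℤ := (w.map stepVec).sum

/-- `w` is a lattice path in `𝒫ₙ`: it has length `2n+2`, stays weakly in the first
quadrant, and ends at `(n, n)`. -/
def IsPath (n : ℕ) (w : List Step) : Prop :=
  w.length = 2 * n + 2 ∧
  (∀ k : ℕ, 0 ≤ (endpt (w.take k)).1 ∧ 0 ≤ (endpt (w.take k)).2) ∧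
  endpt w = ((n : ℤ), (n : ℤ))

/-- The cells of the Young diagram of `θ⁽ⁿ⁾ = (n+2, 2, 1ⁿ)`, in (row, column) matrix
coordinates, 0-indexed, English orientation. -/
def cells (n : ℕ) : Set (ℕ × ℕ) :=
  {c | (c.1 = 0 ∧ c.2 ≤ n + 1) ∨ c = (1, 1) ∨ (c.2 = 0 ∧ 1 ≤ c.1 ∧ c.1 ≤ n + 1)}

/-- `T` is a standard Young tableau of shape `θ⁽ⁿ⁾`: it is a bijective filling of the
cells with `1, …, 2n+4` (and `0` elsewhere), strictly increasing along rows and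
down columns. -/
def IsSYT (n : ℕ) (T : ℕ × ℕ → ℕ) : Prop :=
  (∀ c, c ∉ cells n → T c = 0) ∧
  Set.BijOn T (cells n) (Set.Icc 1 (2 * n + 4)) ∧
  (∀ c ∈ cells n, ∀ d ∈ cells n, c.1 = d.1 → c.2 < d.2 → T c < T d) ∧
  (∀ c ∈ cells n, ∀ d ∈ cells n, c.2 = d.2 → c.1 < d.1 → T c < T d)

/-- The value `m` appears in the arm (first row) of `T`. -/
def InArm (n : ℕ) (T : ℕ × ℕ → ℕ) (m : ℕ) : Prop := ∃ j ≤ n + 1, T (0, j) = m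

/-- The value `m` appears in the leg (first column) of `T`. -/
def InLeg (n : ℕ) (T : ℕ × ℕ → ℕ) (m : ℕ) : Prop := ∃ i ≤ n + 1, T (i, 0) = m

/-- The value `m` appears in the heart (the cell `(1,1)`) of `T`. -/
def InHeart (T : ℕ × ℕ → ℕ) (m : ℕ) : Prop := T (1, 1) = m

open Classical in
/-- The map ψ: the `i`-th letter (1-based, `i = k+1` for `k : Fin (2n+2)`) is determined by
the position of the entry `i+2` of `T`, and, if `i+2` is in the heart, by the position of `2`. -/
noncomputable def psi (n : ℕ) (T : ℕ × ℕ → ℕ) : List Step :=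
  List.ofFn (fun k : Fin (2 * n + 2) =>
    if InArm n T (k.val + 3) then Step.E
    else if InLeg n T (k.val + 3) then Step.N
    else if InHeart T (k.val + 3) ∧ InArm n T 2 then Step.S
    else Step.W)

-- auxiliary lemmas

/-- A count expressed as a filtered-card over indices, for `List.ofFn`. -/
lemma count_eq_sum_map (l : List Step) (a : Step) :
    l.count a = (l.map fun x => if x = a then 1 else 0).sum := by
  induction l with
  | nil => simp
  | cons b t ih =>
      by_cases h : b = a <;> simp [List.count_cons, ih, h] <;> omega

lemma count_ofFn (N : ℕ) (g : ℕ → Step) (a : Step) :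
    (List.ofFn fun i : Fin N => g i.val).count a
      = ((Finset.range N).filter fun i => g i = a).card := by
  rw [count_eq_sum_map, List.map_ofFn, List.sum_ofFn, Finset.card_filter]
  exact Fin.sum_univ_eq_sum_range (fun m => if g m = a then 1 else 0) N

open Finset in
lemma filter_card (N a b : ℕ) (v : ℕ → ℕ) (p : ℕ → Prop) [DecidablePred p]
    (hv : ∀ j, a ≤ j → j ≤ b → 3 ≤ v j ∧ v j ≤ N + 2)
    (hp : ∀ k, k < N → (p k ↔ ∃ j, a ≤ j ∧ j ≤ b ∧ v j = k + 3))
    (hinj : ∀ j j', a ≤ j → j ≤ b → a ≤ j' → j' ≤ b → v j = v j' → j = j') :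
    ((Finset.range N).filter p).card = b + 1 - a := by
  have himg : (Finset.range N).filter p = (Finset.Icc a b).image (fun j => v j - 3) := by
    ext k
    simp only [mem_filter, mem_range, mem_image, mem_Icc]
    constructor
    · rintro ⟨hk, hpk⟩
      obtain ⟨j, hj1, hj2, hj3⟩ := (hp k hk).1 hpk
      exact ⟨j, ⟨hj1, hj2⟩, by omega⟩
    · rintro ⟨j, ⟨hj1, hj2⟩, hj3⟩
      have h1 := hv j hj1 hj2
      have hk : k < N := by omega
      exact ⟨hk, (hp k hk).2 ⟨j, hj1, hj2, by omega⟩⟩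
  rw [himg, Finset.card_image_of_injOn, Nat.card_Icc]
  intro j hj j' hj' h
  simp only [coe_Icc, Set.mem_Icc] at hj hj'
  have h1 := hv j hj.1 hj.2
  have h2 := hv j' hj'.1 hj'.2
  have h' : v j - 3 = v j' - 3 := h
  exact hinj j j' hj.1 hj.2 hj'.1 hj'.2 (by omega)

lemma endpt_eq (w : List Step) :
    endpt w = ((w.count Step.E : ℤ) - (w.count Step.W : ℤ),
      (w.count Step.N : ℤ) - (w.count Step.S : ℤ)) := by
  induction w with
  | nil => simp [endpt]; rfl
  | cons a t ih =>
      have h : endpt (a :: t) = stepVec a + endpt t := by simp [endpt]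
      cases a <;>
        simp [h, ih, stepVec, List.count_cons, Prod.ext_iff] <;> push_cast <;> ring

lemma take_count_le (w : List Step) (good bad : Step)
    (hbad1 : w.count bad ≤ 1)
    (hbad : ∀ i, (h : i < w.length) → w[i] = bad →
        ∃ j, j < i ∧ ∃ hj : j < w.length, w[j] = good) :
    ∀ k, (w.take k).count bad ≤ (w.take k).count good := by
  intro k
  by_cases h0 : bad ∈ w.take k
  · obtain ⟨i, hi, hgi⟩ := List.getElem_of_mem h0
    have hilen : i < w.length := by
      have := hi; rw [List.length_take] at this; omega
    have hwi : w[i] = bad := by rw [List.getElem_take] at hgi; exact hgi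
    obtain ⟨j, hji, hjlen, hgj⟩ := hbad i hilen hwi
    have hj2 : j < (w.take k).length := by
      rw [List.length_take] at hi ⊢; omega
    have hmem : good ∈ w.take k := by
      have : (w.take k)[j] = good := by
        rw [List.getElem_take]; exact hgj
      exact this ▸ List.getElem_mem hj2
    have h1 : 1 ≤ (w.take k).count good := List.count_pos_iff.mpr hmem
    have h2 : (w.take k).count bad ≤ w.count bad :=
      (List.take_sublist k w).count_le bad
    omega
  · have : (w.take k).count bad = 0 := List.count_eq_zero.mpr h0
    omega

open Classical in
/-- The step function of `ψ(T)` as a function on `ℕ`. -/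
noncomputable def stepOf (n : ℕ) (T : ℕ × ℕ → ℕ) (k : ℕ) : Step :=
  if InArm n T (k + 3) then Step.E
  else if InLeg n T (k + 3) then Step.N
  else if InHeart T (k + 3) ∧ InArm n T 2 then Step.S
  else Step.W

lemma psi_eq (n : ℕ) (T : ℕ × ℕ → ℕ) :
    psi n T = List.ofFn fun k : Fin (2 * n + 2) => stepOf n T k.val := rfl

/-- For every standard Young tableau `T` of shape `θ⁽ⁿ⁾`, the word
`ψ(T)` is a lattice path in `𝒫ₙ`; i.e., `ψ` is well-defined as a map `SYT(θ⁽ⁿ⁾) → 𝒫ₙ`. -/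
theorem psi_wellDefined (n : ℕ) (T : ℕ × ℕ → ℕ) (hT : IsSYT n T) :
    IsPath n (psi n T) := by
  obtain ⟨hzero, hbij, hrow, hcol⟩ := hT
  have harm : ∀ j, j ≤ n + 1 → ((0:ℕ), j) ∈ cells n := fun j hj => Or.inl ⟨rfl, hj⟩
  have hleg : ∀ i, 1 ≤ i → i ≤ n + 1 → ((i:ℕ), (0:ℕ)) ∈ cells n :=
    fun i h1 h2 => Or.inr (Or.inr ⟨rfl, h1, h2⟩)
  have hheart : ((1:ℕ), (1:ℕ)) ∈ cells n := Or.inr (Or.inl rfl)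
  have hmaps : ∀ c ∈ cells n, 1 ≤ T c ∧ T c ≤ 2 * n + 4 := fun c hc => by
    have := hbij.mapsTo hc; simpa [Set.mem_Icc] using this
  have hinj := hbij.injOn
  have hgt01 : T (0, 0) < T (0, 1) :=
    hrow _ (harm 0 (by omega)) _ (harm 1 (by omega)) rfl (by omega)
  have hgt10 : T (0, 0) < T (1, 0) :=
    hcol _ (harm 0 (by omega)) _ (hleg 1 (by omega) (by omega)) rfl (by omega)
  have hh01 : T (0, 1) < T (1, 1) := hcol _ (harm 1 (by omega)) _ hheart rfl (by omega)
  have hh10 : T (1, 0) < T (1, 1) := hrow _ (hleg 1 (by omega) (by omega)) _ hheart rfl (by omega)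
  have hhb := hmaps _ hheart
  have hb01 := hmaps _ (harm 1 (by omega))
  have hb10 := hmaps _ (hleg 1 (by omega) (by omega))
  -- T (0,0) = 1
  have hlt00 : ∀ c ∈ cells n, c ≠ ((0:ℕ), (0:ℕ)) → T (0, 0) < T c := by
    rintro ⟨a, b⟩ hc hne
    simp only [cells, Set.mem_setOf_eq] at hc
    rcases hc with ⟨ha, hb⟩ | h | ⟨hb, ha1, ha2⟩
    · subst ha
      have hbpos : 0 < b := by
        rcases Nat.eq_zero_or_pos b with h | h
        · exact absurd (by simp [h]) hne
        · exact h
      exact hrow _ (harm 0 (by omega)) _ (harm b hb) rfl hbpos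
    · simp only [Prod.mk.injEq] at h
      obtain ⟨rfl, rfl⟩ := h
      omega
    · subst hb
      exact hcol _ (harm 0 (by omega)) _ (hleg a ha1 ha2) rfl (by omega)
  have h001 : T (0, 0) = 1 := by
    obtain ⟨c, hc, hTc⟩ := hbij.surjOn (Set.mem_Icc.mpr ⟨le_refl 1, by omega⟩)
    by_cases hce : c = ((0:ℕ), (0:ℕ))
    · rw [hce] at hTc; exact hTc
    · have h1 := hlt00 c hc hce
      have h2 := hmaps _ (harm 0 (by omega))
      rw [hTc] at h1
      omega
  -- exclusions
  have hAL : ∀ j i, j ≤ n + 1 → 1 ≤ i → i ≤ n + 1 → T (0, j) = T (i, 0) → False := by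
    intro j i hj h1 h2 he
    have := hinj (harm j hj) (hleg i h1 h2) he
    simp only [Prod.mk.injEq] at this
    omega
  have hAH : ∀ j, j ≤ n + 1 → T (0, j) = T (1, 1) → False := by
    intro j hj he
    have := hinj (harm j hj) hheart he
    simp only [Prod.mk.injEq] at this
    omega
  have hLH : ∀ i, 1 ≤ i → i ≤ n + 1 → T (i, 0) = T (1, 1) → False := by
    intro i h1 h2 he
    have := hinj (hleg i h1 h2) hheart he
    simp only [Prod.mk.injEq] at this
    omega
  -- classification
  have hclass : ∀ m, 1 ≤ m → m ≤ 2 * n + 4 →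
      (∃ j ≤ n + 1, T (0, j) = m) ∨ (∃ i, 1 ≤ i ∧ i ≤ n + 1 ∧ T (i, 0) = m) ∨ T (1, 1) = m := by
    intro m h1 h2
    obtain ⟨c, hc, hTc⟩ := hbij.surjOn (Set.mem_Icc.mpr ⟨h1, h2⟩)
    obtain ⟨a, b⟩ := c
    simp only [cells, Set.mem_setOf_eq] at hc
    rcases hc with ⟨ha, hb⟩ | h | ⟨hb, ha1, ha2⟩
    · subst ha
      exact Or.inl ⟨b, hb, hTc⟩
    · simp only [Prod.mk.injEq] at h
      obtain ⟨rfl, rfl⟩ := h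
      exact Or.inr (Or.inr hTc)
    · subst hb
      exact Or.inr (Or.inl ⟨a, ha1, ha2, hTc⟩)
  -- the position of 2
  have h2loc : T (0, 1) = 2 ∨ T (1, 0) = 2 := by
    rcases hclass 2 (by omega) (by omega) with ⟨j, hj, he⟩ | ⟨i, hi1, hi2, he⟩ | he
    · rcases Nat.lt_or_ge j 2 with h | h
      · interval_cases j
        · omega
        · exact Or.inl he
      · have := hrow _ (harm 1 (by omega)) _ (harm j hj) rfl (by omega)
        omega
    · rcases Nat.lt_or_ge i 2 with h | h
      · interval_cases i
        exact Or.inr he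
      · have := hcol _ (hleg 1 (by omega) (by omega)) _ (hleg i (by omega) hi2) rfl (by omega)
        omega
    · omega
  rw [psi_eq]
  set w := List.ofFn (fun k : Fin (2 * n + 2) => stepOf n T k.val) with hw
  have hwlen : w.length = 2 * n + 2 := by simp [hw]
  have hwget : ∀ i (h : i < w.length), w[i] = stepOf n T i := by
    intro i h
    simp only [hw]
    rw [List.getElem_ofFn]
  rcases h2loc with h2 | h2
  · -- Case A : 2 is in the arm, at (0,1)
    have armge : ∀ j, 2 ≤ j → j ≤ n + 1 → 3 ≤ T (0, j) ∧ T (0, j) ≤ 2 * n + 2 + 2 := by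
      intro j hj1 hj2
      have h1 := hrow _ (harm 1 (by omega)) _ (harm j hj2) rfl (by omega)
      have h2' := hmaps _ (harm j hj2)
      omega
    have legge : ∀ i, 1 ≤ i → i ≤ n + 1 → 3 ≤ T (i, 0) ∧ T (i, 0) ≤ 2 * n + 2 + 2 := by
      intro i h1 h2'
      have hb := hmaps _ (hleg i h1 h2')
      have hne1 : T (i, 0) ≠ 1 := by
        intro he
        have := hinj (hleg i h1 h2') (harm 0 (by omega)) (by rw [he, h001])
        simp only [Prod.mk.injEq] at this
        omega
      have hne2 : T (i, 0) ≠ 2 := by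
        intro he
        have := hinj (hleg i h1 h2') (harm 1 (by omega)) (by rw [he, h2])
        simp only [Prod.mk.injEq] at this
        omega
      omega
    have hsE : ∀ k, stepOf n T k = Step.E ↔ ∃ j, 2 ≤ j ∧ j ≤ n + 1 ∧ T (0, j) = k + 3 := by
      intro k
      constructor
      · intro hs
        have hA : InArm n T (k + 3) := by
          by_contra hA
          rw [stepOf, if_neg hA] at hs
          split_ifs at hs <;> simp at hs
        obtain ⟨j, hj, he⟩ := hA
        have hj0 : j ≠ 0 := by rintro rfl; omega
        have hj1 : j ≠ 1 := by rintro rfl; omega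
        exact ⟨j, by omega, hj, he⟩
      · rintro ⟨j, hj1, hj2, he⟩
        have hA : InArm n T (k + 3) := ⟨j, hj2, he⟩
        rw [stepOf, if_pos hA]
    have hsN : ∀ k, stepOf n T k = Step.N ↔ ∃ i, 1 ≤ i ∧ i ≤ n + 1 ∧ T (i, 0) = k + 3 := by
      intro k
      constructor
      · intro hs
        by_cases hA : InArm n T (k + 3)
        · rw [stepOf, if_pos hA] at hs; simp at hs
        · by_cases hL : InLeg n T (k + 3)
          · obtain ⟨i, hi, he⟩ := hL
            have hi0 : i ≠ 0 := by rintro rfl; omega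
            exact ⟨i, by omega, hi, he⟩
          · rw [stepOf, if_neg hA, if_neg hL] at hs
            split_ifs at hs <;> simp at hs
      · rintro ⟨i, h1, h2', he⟩
        have hL : InLeg n T (k + 3) := ⟨i, h2', he⟩
        have hA : ¬ InArm n T (k + 3) := by
          rintro ⟨j, hj, he'⟩
          exact hAL j i hj h1 h2' (by rw [he', he])
        rw [stepOf, if_neg hA, if_pos hL]
    have hsS : ∀ k, stepOf n T k = Step.S ↔ T (1, 1) = k + 3 := by
      intro k
      constructor
      · intro hs
        by_cases hA : InArm n T (k + 3)
        · rw [stepOf, if_pos hA] at hs; simp at hs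
        · by_cases hL : InLeg n T (k + 3)
          · rw [stepOf, if_neg hA, if_pos hL] at hs; simp at hs
          · by_cases hH : InHeart T (k + 3) ∧ InArm n T 2
            · exact hH.1
            · rw [stepOf, if_neg hA, if_neg hL, if_neg hH] at hs; simp at hs
      · intro he
        have hA : ¬ InArm n T (k + 3) := by
          rintro ⟨j, hj, he'⟩
          exact hAH j hj (by rw [he', he])
        have hL : ¬ InLeg n T (k + 3) := by
          rintro ⟨i, hi, he'⟩
          have hi0 : i ≠ 0 := by rintro rfl; omega
          exact hLH i (by omega) hi (by rw [he', he])
        have hH : InHeart T (k + 3) ∧ InArm n T 2 := ⟨he, ⟨1, by omega, h2⟩⟩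
        rw [stepOf, if_neg hA, if_neg hL, if_pos hH]
    have hsW : ∀ k, k < 2 * n + 2 → stepOf n T k ≠ Step.W := by
      intro k hk hs
      rcases hclass (k + 3) (by omega) (by omega) with ⟨j, hj, he⟩ | ⟨i, h1, h2', he⟩ | he
      · have hA : InArm n T (k + 3) := ⟨j, hj, he⟩
        rw [stepOf, if_pos hA] at hs
        simp at hs
      · rw [(hsN k).2 ⟨i, h1, h2', he⟩] at hs; simp at hs
      · rw [(hsS k).2 he] at hs; simp at hs
    -- counts
    have cE : w.count Step.E = n := by
      have h := filter_card (2 * n + 2) 2 (n + 1) (fun j => T (0, j))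
          (fun k => stepOf n T k = Step.E)
          (fun j h1 h2' => armge j h1 h2')
          (fun k _ => hsE k)
          (fun j j' hj1 hj2 hj1' hj2' he => by
            have := hinj (harm j hj2) (harm j' hj2') he
            simpa using this)
      rw [hw, count_ofFn, h]
      omega
    have cN : w.count Step.N = n + 1 := by
      have h := filter_card (2 * n + 2) 1 (n + 1) (fun i => T (i, 0))
          (fun k => stepOf n T k = Step.N)
          (fun i h1 h2' => legge i h1 h2')
          (fun k _ => hsN k)
          (fun i i' hi1 hi2 hi1' hi2' he => by
            have := hinj (hleg i hi1 hi2) (hleg i' hi1' hi2') he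
            simpa using this)
      rw [hw, count_ofFn, h]
      omega
    have cS : w.count Step.S = 1 := by
      have h := filter_card (2 * n + 2) 0 0 (fun _ => T (1, 1))
          (fun k => stepOf n T k = Step.S)
          (fun j _ _ => ⟨show 3 ≤ T (1, 1) by omega, show T (1, 1) ≤ 2 * n + 2 + 2 by omega⟩)
          (fun k _ => by
            constructor
            · intro h
              exact ⟨0, by omega, by omega, (hsS k).1 h⟩
            · rintro ⟨j, -, -, h⟩
              exact (hsS k).2 h)
          (fun j j' h1 h2' h1' h2'' _ => by omega)
      rw [hw, count_ofFn, h]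
    have cW : w.count Step.W = 0 := by
      have h := filter_card (2 * n + 2) 1 0 (fun _ => T (1, 1))
          (fun k => stepOf n T k = Step.W)
          (fun j h1 h2' => by omega)
          (fun k hk => by
            constructor
            · intro h
              exact absurd (show stepOf n T k = Step.W from h) (hsW k hk)
            · rintro ⟨j, h1, h2', -⟩
              omega)
          (fun j j' h1 h2' h1' h2'' _ => by omega)
      rw [hw, count_ofFn, h]
    -- endpoint
    have hend : endpt w = ((n : ℤ), (n : ℤ)) := by
      rw [endpt_eq, cE, cN, cS, cW]
      simp only [Prod.mk.injEq]
      push_cast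
      constructor <;> ring
    have hbadW : ∀ i, (h : i < w.length) → w[i] = Step.W →
        ∃ j, j < i ∧ ∃ hj : j < w.length, w[j] = Step.E := by
      intro i hi he
      rw [hwget i hi] at he
      rw [hwlen] at hi
      exact absurd he (hsW i hi)
    have hbadS : ∀ i, (h : i < w.length) → w[i] = Step.S →
        ∃ j, j < i ∧ ∃ hj : j < w.length, w[j] = Step.N := by
      intro i hi he
      rw [hwget i hi] at he
      have hheq : T (1, 1) = i + 3 := (hsS i).1 he
      have hb := legge 1 (by omega) (by omega)
      have hjlen : T (1, 0) - 3 < w.length := by rw [hwlen]; omega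
      refine ⟨T (1, 0) - 3, by omega, hjlen, ?_⟩
      rw [hwget _ hjlen]
      exact (hsN _).2 ⟨1, le_refl 1, by omega, by omega⟩
    have hx := take_count_le w Step.E Step.W (by omega) hbadW
    have hy := take_count_le w Step.N Step.S (by omega) hbadS
    refine ⟨hwlen, fun k => ?_, hend⟩
    have h1 := hx k
    have h2' := hy k
    rw [endpt_eq]
    constructor
    · simp only
      omega
    · simp only
      omega
  · -- Case B : 2 is in the leg, at (1,0)
    have legge : ∀ i, 2 ≤ i → i ≤ n + 1 → 3 ≤ T (i, 0) ∧ T (i, 0) ≤ 2 * n + 2 + 2 := by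
      intro i hi1 hi2
      have h1 := hcol _ (hleg 1 (by omega) (by omega)) _ (hleg i (by omega) hi2) rfl (by omega)
      have h2' := hmaps _ (hleg i (by omega) hi2)
      omega
    have armge : ∀ j, 1 ≤ j → j ≤ n + 1 → 3 ≤ T (0, j) ∧ T (0, j) ≤ 2 * n + 2 + 2 := by
      intro j h1 h2'
      have hb := hmaps _ (harm j h2')
      have hne1 : T (0, j) ≠ 1 := by
        intro he
        have := hinj (harm j h2') (harm 0 (by omega)) (by rw [he, h001])
        simp only [Prod.mk.injEq] at this
        omega
      have hne2 : T (0, j) ≠ 2 := by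
        intro he
        exact hAL j 1 h2' (by omega) (by omega) (by rw [he, h2])
      omega
    have hnA2 : ¬ InArm n T 2 := by
      rintro ⟨j, hj, he⟩
      exact hAL j 1 hj (by omega) (by omega) (by rw [he, h2])
    have hsE : ∀ k, stepOf n T k = Step.E ↔ ∃ j, 1 ≤ j ∧ j ≤ n + 1 ∧ T (0, j) = k + 3 := by
      intro k
      constructor
      · intro hs
        have hA : InArm n T (k + 3) := by
          by_contra hA
          rw [stepOf, if_neg hA] at hs
          split_ifs at hs <;> simp at hs
        obtain ⟨j, hj, he⟩ := hA
        have hj0 : j ≠ 0 := by rintro rfl; omega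
        exact ⟨j, by omega, hj, he⟩
      · rintro ⟨j, hj1, hj2, he⟩
        have hA : InArm n T (k + 3) := ⟨j, hj2, he⟩
        rw [stepOf, if_pos hA]
    have hsN : ∀ k, stepOf n T k = Step.N ↔ ∃ i, 2 ≤ i ∧ i ≤ n + 1 ∧ T (i, 0) = k + 3 := by
      intro k
      constructor
      · intro hs
        by_cases hA : InArm n T (k + 3)
        · rw [stepOf, if_pos hA] at hs; simp at hs
        · by_cases hL : InLeg n T (k + 3)
          · obtain ⟨i, hi, he⟩ := hL
            have hi0 : i ≠ 0 := by rintro rfl; omega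
            have hi1 : i ≠ 1 := by rintro rfl; omega
            exact ⟨i, by omega, hi, he⟩
          · rw [stepOf, if_neg hA, if_neg hL] at hs
            split_ifs at hs <;> simp at hs
      · rintro ⟨i, h1, h2', he⟩
        have hL : InLeg n T (k + 3) := ⟨i, h2', he⟩
        have hA : ¬ InArm n T (k + 3) := by
          rintro ⟨j, hj, he'⟩
          exact hAL j i hj (by omega) h2' (by rw [he', he])
        rw [stepOf, if_neg hA, if_pos hL]
    have hsW : ∀ k, k < 2 * n + 2 → (stepOf n T k = Step.W ↔ T (1, 1) = k + 3) := by
      intro k hk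
      constructor
      · intro hs
        by_cases hA : InArm n T (k + 3)
        · rw [stepOf, if_pos hA] at hs; simp at hs
        · by_cases hL : InLeg n T (k + 3)
          · rw [stepOf, if_neg hA, if_pos hL] at hs; simp at hs
          · rcases hclass (k + 3) (by omega) (by omega) with ⟨j, hj, he⟩ | ⟨i, h1, h2', he⟩ | he
            · exact absurd (⟨j, hj, he⟩ : InArm n T (k + 3)) hA
            · exact absurd (⟨i, h2', he⟩ : InLeg n T (k + 3)) hL
            · exact he
      · intro he
        have hA : ¬ InArm n T (k + 3) := by
          rintro ⟨j, hj, he'⟩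
          exact hAH j hj (by rw [he', he])
        have hL : ¬ InLeg n T (k + 3) := by
          rintro ⟨i, hi, he'⟩
          have hi0 : i ≠ 0 := by rintro rfl; omega
          exact hLH i (by omega) hi (by rw [he', he])
        rw [stepOf, if_neg hA, if_neg hL, if_neg (fun hc => hnA2 hc.2)]
    have hsS : ∀ k, k < 2 * n + 2 → stepOf n T k ≠ Step.S := by
      intro k hk hs
      rcases hclass (k + 3) (by omega) (by omega) with ⟨j, hj, he⟩ | ⟨i, h1, h2', he⟩ | he
      · have hA : InArm n T (k + 3) := ⟨j, hj, he⟩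
        rw [stepOf, if_pos hA] at hs
        simp at hs
      · rcases Nat.lt_or_ge i 2 with h | h
        · interval_cases i
          omega
        · rw [(hsN k).2 ⟨i, h, h2', he⟩] at hs; simp at hs
      · rw [(hsW k hk).2 he] at hs; simp at hs
    -- counts
    have cE : w.count Step.E = n + 1 := by
      have h := filter_card (2 * n + 2) 1 (n + 1) (fun j => T (0, j))
          (fun k => stepOf n T k = Step.E)
          (fun j h1 h2' => armge j h1 h2')
          (fun k _ => hsE k)
          (fun j j' hj1 hj2 hj1' hj2' he => by
            have := hinj (harm j hj2) (harm j' hj2') he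
            simpa using this)
      rw [hw, count_ofFn, h]
      omega
    have cN : w.count Step.N = n := by
      have h := filter_card (2 * n + 2) 2 (n + 1) (fun i => T (i, 0))
          (fun k => stepOf n T k = Step.N)
          (fun i h1 h2' => legge i h1 h2')
          (fun k _ => hsN k)
          (fun i i' hi1 hi2 hi1' hi2' he => by
            have := hinj (hleg i (by omega) hi2) (hleg i' (by omega) hi2') he
            simpa using this)
      rw [hw, count_ofFn, h]
      omega
    have cW : w.count Step.W = 1 := by
      have h := filter_card (2 * n + 2) 0 0 (fun _ => T (1, 1))
          (fun k => stepOf n T k = Step.W)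
          (fun j _ _ => ⟨show 3 ≤ T (1, 1) by omega, show T (1, 1) ≤ 2 * n + 2 + 2 by omega⟩)
          (fun k hk => by
            constructor
            · intro h
              exact ⟨0, by omega, by omega, (hsW k hk).1 h⟩
            · rintro ⟨j, -, -, h⟩
              exact (hsW k hk).2 h)
          (fun j j' h1 h2' h1' h2'' _ => by omega)
      rw [hw, count_ofFn, h]
    have cS : w.count Step.S = 0 := by
      have h := filter_card (2 * n + 2) 1 0 (fun _ => T (1, 1))
          (fun k => stepOf n T k = Step.S)
          (fun j h1 h2' => by omega)
          (fun k hk => by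
            constructor
            · intro h
              exact absurd (show stepOf n T k = Step.S from h) (hsS k hk)
            · rintro ⟨j, h1, h2', -⟩
              omega)
          (fun j j' h1 h2' h1' h2'' _ => by omega)
      rw [hw, count_ofFn, h]
    -- endpoint
    have hend : endpt w = ((n : ℤ), (n : ℤ)) := by
      rw [endpt_eq, cE, cN, cS, cW]
      simp only [Prod.mk.injEq]
      push_cast
      constructor <;> ring
    have hbadS : ∀ i, (h : i < w.length) → w[i] = Step.S →
        ∃ j, j < i ∧ ∃ hj : j < w.length, w[j] = Step.N := by
      intro i hi he
      rw [hwget i hi] at he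
      rw [hwlen] at hi
      exact absurd he (hsS i hi)
    have hbadW : ∀ i, (h : i < w.length) → w[i] = Step.W →
        ∃ j, j < i ∧ ∃ hj : j < w.length, w[j] = Step.E := by
      intro i hi he
      rw [hwget i hi] at he
      rw [hwlen] at hi
      have hheq : T (1, 1) = i + 3 := (hsW i hi).1 he
      have hb := armge 1 (by omega) (by omega)
      have hjlen : T (0, 1) - 3 < w.length := by rw [hwlen]; omega
      refine ⟨T (0, 1) - 3, by omega, hjlen, ?_⟩
      rw [hwget _ hjlen]
      exact (hsE _).2 ⟨1, le_refl 1, by omega, by omega⟩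
    have hx := take_count_le w Step.E Step.W (by omega) hbadW
    have hy := take_count_le w Step.N Step.S (by omega) hbadS
    refine ⟨hwlen, fun k => ?_, hend⟩
    have h1 := hx k
    have h2' := hy k
    rw [endpt_eq]
    constructor
    · simp only
      omega
    · simp only
      omega
end

section
/- For every n ≥ 0, the map ψ : SYT(θ^(n)) → P_n, defined by ψ(T) = p_1 p_2 … p_{2n+2} with p_i = E if the entry i+2 of T lies in the arm, p_i = N if i+2 lies in the leg, p_i = S if i+2 lies in the heart and 2 lies in the arm, and p_i = W if i+2 lies in the heart and 2 lies in the leg, is injective. -/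
-- auxiliary lemmas
lemma arm_mem {n : ℕ} {j : ℕ} (hj : j ≤ n + 1) : ((0, j) : ℕ × ℕ) ∈ cells n :=
  Or.inl ⟨rfl, hj⟩

lemma heart_mem {n : ℕ} : ((1, 1) : ℕ × ℕ) ∈ cells n := Or.inr (Or.inl rfl)

lemma leg_mem {n : ℕ} {i : ℕ} (h1 : 1 ≤ i) (hi : i ≤ n + 1) : ((i, 0) : ℕ × ℕ) ∈ cells n :=
  Or.inr (Or.inr ⟨rfl, h1, hi⟩)

lemma zero_lt {n : ℕ} {T : ℕ × ℕ → ℕ} (hT : IsSYT n T) {c : ℕ × ℕ}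
    (hc : c ∈ cells n) (hne : c ≠ (0, 0)) : T (0, 0) < T c := by
  obtain ⟨h0, hbij, hrow, hcol⟩ := hT
  obtain ⟨a, b⟩ := c
  rcases hc with ⟨ha, hb⟩ | h | ⟨hb, h1, ha⟩
  · simp only at ha hb; subst ha
    have hb0 : 0 < b := by
      rcases Nat.eq_zero_or_pos b with h | h
      · exact absurd (by simp [h]) hne
      · exact h
    exact hrow (0,0) (arm_mem (Nat.zero_le _)) (0,b) (arm_mem hb) rfl hb0
  · rw [h]
    calc T (0,0) < T (0,1) := hrow (0,0) (arm_mem (Nat.zero_le _)) (0,1)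
          (arm_mem (by omega)) rfl one_pos
      _ < T (1,1) := hcol (0,1) (arm_mem (by omega)) (1,1) heart_mem rfl one_pos
  · simp only at hb; subst hb
    exact hcol (0,0) (arm_mem (Nat.zero_le _)) (a,0) (leg_mem h1 ha) rfl h1

lemma zero_cell {n : ℕ} {T : ℕ × ℕ → ℕ} (hT : IsSYT n T) : T (0, 0) = 1 := by
  obtain ⟨c, hc, hc1⟩ := hT.2.1.2.2 (show 1 ∈ Set.Icc 1 (2*n+4) by simp)
  have h00 : T (0,0) ∈ Set.Icc 1 (2*n+4) := hT.2.1.1 (arm_mem (Nat.zero_le _))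
  simp only [Set.mem_Icc] at h00
  by_cases h : c = (0,0)
  · rw [← h, hc1]
  · have h2 := zero_lt hT hc h
    rw [hc1] at h2
    omega

lemma heart_ge {n : ℕ} {T : ℕ × ℕ → ℕ} (hT : IsSYT n T) : 3 ≤ T (1, 1) := by
  have h1 := zero_cell hT
  have h2 := zero_lt hT (heart_mem (n := n)) (by simp)
  have h3 : T (0,1) < T (1,1) := hT.2.2.2 (0,1) (arm_mem (by omega)) (1,1) heart_mem rfl one_pos
  have h4 : T (0,0) < T (0,1) := hT.2.2.1 (0,0) (arm_mem (Nat.zero_le _)) (0,1)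
    (arm_mem (by omega)) rfl one_pos
  omega

lemma heart_le {n : ℕ} {T : ℕ × ℕ → ℕ} (hT : IsSYT n T) : T (1, 1) ≤ 2 * n + 4 :=
  (hT.2.1.1 heart_mem).2

lemma not_arm_leg {n : ℕ} {T : ℕ × ℕ → ℕ} (hT : IsSYT n T) {m : ℕ} (hm : 2 ≤ m)
    (ha : InArm n T m) (hl : InLeg n T m) : False := by
  obtain ⟨j, hj, hja⟩ := ha
  obtain ⟨i, hi, hil⟩ := hl
  have hz := zero_cell hT
  rcases Nat.eq_zero_or_pos i with hi0 | hi0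
  · subst hi0; rw [hz] at hil; omega
  have := hT.2.1.2.1 (arm_mem hj) (leg_mem hi0 hi) (by rw [hja, hil])
  simp [Prod.ext_iff] at this
  omega

lemma not_arm_heart {n : ℕ} {T : ℕ × ℕ → ℕ} (hT : IsSYT n T) {m : ℕ}
    (ha : InArm n T m) (hh : InHeart T m) : False := by
  obtain ⟨j, hj, hja⟩ := ha
  have := hT.2.1.2.1 (arm_mem hj) heart_mem (by rw [hja, hh])
  simp at this

lemma not_leg_heart {n : ℕ} {T : ℕ × ℕ → ℕ} (hT : IsSYT n T) {m : ℕ}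
    (hl : InLeg n T m) (hh : InHeart T m) : False := by
  obtain ⟨i, hi, hil⟩ := hl
  rcases Nat.eq_zero_or_pos i with hi0 | hi0
  · subst hi0
    have hz := zero_cell hT
    have h3 := heart_ge hT
    rw [hz] at hil
    rw [InHeart, ← hil] at hh
    omega
  have := hT.2.1.2.1 (leg_mem hi0 hi) heart_mem (by rw [hil, hh])
  simp [Prod.ext_iff] at this

lemma region_total {n : ℕ} {T : ℕ × ℕ → ℕ} (hT : IsSYT n T) {m : ℕ}
    (h1 : 1 ≤ m) (h2 : m ≤ 2 * n + 4) : InArm n T m ∨ InLeg n T m ∨ InHeart T m := by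
  obtain ⟨c, hc, hcm⟩ := hT.2.1.2.2 (Set.mem_Icc.mpr ⟨h1, h2⟩)
  obtain ⟨a, b⟩ := c
  rcases hc with ⟨ha, hb⟩ | h | ⟨hb, hh1, ha⟩
  · simp only at ha hb; subst ha
    exact Or.inl ⟨b, hb, hcm⟩
  · rw [h] at hcm
    exact Or.inr (Or.inr hcm)
  · simp only at hb; subst hb
    exact Or.inr (Or.inl ⟨a, ha, hcm⟩)

lemma col_mem {n : ℕ} {i : ℕ} (hi : i ≤ n + 1) : ((i, 0) : ℕ × ℕ) ∈ cells n := by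
  rcases Nat.eq_zero_or_pos i with h | h
  · subst h; exact arm_mem (Nat.zero_le _)
  · exact leg_mem h hi

open Classical in
lemma decode {n : ℕ} {T T' : ℕ × ℕ → ℕ} (hT : IsSYT n T) (hT' : IsSYT n T')
    {m : ℕ} (h3 : 3 ≤ m) (h2 : m ≤ 2 * n + 4)
    (heq : (if InArm n T m then Step.E else if InLeg n T m then Step.N
        else if InHeart T m ∧ InArm n T 2 then Step.S else Step.W) =
      (if InArm n T' m then Step.E else if InLeg n T' m then Step.N
        else if InHeart T' m ∧ InArm n T' 2 then Step.S else Step.W)) :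
    (InArm n T m ↔ InArm n T' m) ∧ (InLeg n T m ↔ InLeg n T' m) ∧
    (InHeart T m ↔ InHeart T' m) ∧ (InHeart T m → (InArm n T 2 ↔ InArm n T' 2)) := by
  have exT := region_total hT (by omega) h2
  have exT' := region_total hT' (by omega) h2
  have e1 := fun h h' => not_arm_leg hT (show 2 ≤ m by omega) h h'
  have e2 := fun h h' => not_arm_leg hT' (show 2 ≤ m by omega) h h'
  have e3 := fun h h' => not_arm_heart hT (m := m) h h'
  have e4 := fun h h' => not_arm_heart hT' (m := m) h h'
  have e5 := fun h h' => not_leg_heart hT (m := m) h h'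
  have e6 := fun h h' => not_leg_heart hT' (m := m) h h'
  by_cases a1 : InArm n T m <;> by_cases a2 : InArm n T' m <;>
    by_cases l1 : InLeg n T m <;> by_cases l2 : InLeg n T' m <;>
    by_cases h1 : InHeart T m <;> by_cases h2' : InHeart T' m <;>
    by_cases b1 : InArm n T 2 <;> by_cases b2 : InArm n T' 2 <;>
    simp_all

/-- The map `ψ : SYT(θ⁽ⁿ⁾) → 𝒫ₙ` is injective. -/
theorem psi_injective (n : ℕ) :
    Set.InjOn (psi n) {T : ℕ × ℕ → ℕ | IsSYT n T} := by
  haveI : WellFoundedLT (Fin (n + 2)) := Finite.to_wellFoundedLT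
  intro T hT T' hT' hpsi
  simp only [Set.mem_setOf_eq] at hT hT'
  rw [psi, psi, List.ofFn_inj] at hpsi
  have key : ∀ m, 3 ≤ m → m ≤ 2 * n + 4 →
      (InArm n T m ↔ InArm n T' m) ∧ (InLeg n T m ↔ InLeg n T' m) ∧
      (InHeart T m ↔ InHeart T' m) ∧ (InHeart T m → (InArm n T 2 ↔ InArm n T' 2)) := by
    intro m hm3 hm2
    have hk : m - 3 < 2 * n + 2 := by omega
    have h := congrFun hpsi ⟨m - 3, hk⟩
    simp only at h
    rw [show m - 3 + 3 = m by omega] at h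
    exact decode hT hT' hm3 hm2 h
  -- the heart values agree, and position of 2 agrees
  have hheq : T' (1, 1) = T (1, 1) :=
    ((key _ (heart_ge hT) (heart_le hT)).2.2.1).mp rfl
  have harm2 : InArm n T 2 ↔ InArm n T' 2 :=
    (key _ (heart_ge hT) (heart_le hT)).2.2.2 rfl
  have hleg2 : InLeg n T 2 ↔ InLeg n T' 2 := by
    have aux : ∀ S : ℕ × ℕ → ℕ, IsSYT n S → (InLeg n S 2 ↔ ¬InArm n S 2) := by
      intro S hS
      constructor
      · intro hl ha
        exact not_arm_leg hS le_rfl ha hl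
      · intro ha
        rcases region_total (m := 2) hS (by omega) (by omega) with h | h | h
        · exact absurd h ha
        · exact h
        · have h2 := heart_ge hS
          have h3 : S (1, 1) = 2 := h
          omega
    rw [aux T hT, aux T' hT', harm2]
  have armIff : ∀ m, 1 ≤ m → m ≤ 2 * n + 4 → (InArm n T m ↔ InArm n T' m) := by
    intro m h1 h2
    rcases Nat.lt_or_ge m 3 with h | h
    · interval_cases m
      · constructor <;> intro _ <;> exact ⟨0, Nat.zero_le _, zero_cell (by assumption)⟩
      · exact harm2
    · exact (key m h h2).1
  have legIff : ∀ m, 1 ≤ m → m ≤ 2 * n + 4 → (InLeg n T m ↔ InLeg n T' m) := by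
    intro m h1 h2
    rcases Nat.lt_or_ge m 3 with h | h
    · interval_cases m
      · constructor <;> intro _ <;> exact ⟨0, Nat.zero_le _, zero_cell (by assumption)⟩
      · exact hleg2
    · exact (key m h h2).2.1
  -- row equality
  have hrowEq : ∀ j ≤ n + 1, T (0, j) = T' (0, j) := by
    have hf : StrictMono (fun j : Fin (n + 2) => T (0, j.val)) := fun a b hab =>
      hT.2.2.1 (0, a.val) (arm_mem (by omega)) (0, b.val) (arm_mem (by omega)) rfl hab
    have hg : StrictMono (fun j : Fin (n + 2) => T' (0, j.val)) := fun a b hab =>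
      hT'.2.2.1 (0, a.val) (arm_mem (by omega)) (0, b.val) (arm_mem (by omega)) rfl hab
    have hr : Set.range (fun j : Fin (n + 2) => T (0, j.val)) =
        Set.range (fun j : Fin (n + 2) => T' (0, j.val)) := by
      ext m
      simp only [Set.mem_range]
      constructor
      · rintro ⟨j, rfl⟩
        have hmem := hT.2.1.1 (arm_mem (show j.val ≤ n + 1 by omega))
        simp only [Set.mem_Icc] at hmem
        obtain ⟨j', hj', he⟩ := (armIff _ hmem.1 hmem.2).mp ⟨j.val, by omega, rfl⟩
        exact ⟨⟨j', by omega⟩, he⟩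
      · rintro ⟨j, rfl⟩
        have hmem := hT'.2.1.1 (arm_mem (show j.val ≤ n + 1 by omega))
        simp only [Set.mem_Icc] at hmem
        obtain ⟨j', hj', he⟩ := (armIff _ hmem.1 hmem.2).mpr ⟨j.val, by omega, rfl⟩
        exact ⟨⟨j', by omega⟩, he⟩
    have heqf := (hf.range_inj hg).mp hr
    intro j hj
    exact congrFun heqf ⟨j, by omega⟩
  -- column equality
  have hcolEq : ∀ i ≤ n + 1, T (i, 0) = T' (i, 0) := by
    have hf : StrictMono (fun i : Fin (n + 2) => T (i.val, 0)) := fun a b hab =>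
      hT.2.2.2 (a.val, 0) (col_mem (by omega)) (b.val, 0) (col_mem (by omega)) rfl hab
    have hg : StrictMono (fun i : Fin (n + 2) => T' (i.val, 0)) := fun a b hab =>
      hT'.2.2.2 (a.val, 0) (col_mem (by omega)) (b.val, 0) (col_mem (by omega)) rfl hab
    have hr : Set.range (fun i : Fin (n + 2) => T (i.val, 0)) =
        Set.range (fun i : Fin (n + 2) => T' (i.val, 0)) := by
      ext m
      simp only [Set.mem_range]
      constructor
      · rintro ⟨i, rfl⟩
        have hmem := hT.2.1.1 (col_mem (show i.val ≤ n + 1 by omega))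
        simp only [Set.mem_Icc] at hmem
        obtain ⟨i', hi', he⟩ := (legIff _ hmem.1 hmem.2).mp ⟨i.val, by omega, rfl⟩
        exact ⟨⟨i', by omega⟩, he⟩
      · rintro ⟨i, rfl⟩
        have hmem := hT'.2.1.1 (col_mem (show i.val ≤ n + 1 by omega))
        simp only [Set.mem_Icc] at hmem
        obtain ⟨i', hi', he⟩ := (legIff _ hmem.1 hmem.2).mpr ⟨i.val, by omega, rfl⟩
        exact ⟨⟨i', by omega⟩, he⟩
    have heqf := (hf.range_inj hg).mp hr
    intro i hi
    exact congrFun heqf ⟨i, by omega⟩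
  funext c
  by_cases hc : c ∈ cells n
  · obtain ⟨a, b⟩ := c
    rcases hc with ⟨ha, hb⟩ | h | ⟨hb, h1, ha⟩
    · simp only at ha hb; subst ha
      exact hrowEq b hb
    · rw [h, hheq]
    · simp only at hb; subst hb
      exact hcolEq a ha
  · rw [hT.1 _ hc, hT'.1 _ hc]
end
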